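/- Let ω > 1 with ω + 1 ≤ σ, and let t0 < t1 with ω − 1 ≤ t1 − t0 ≤ ω + 1. Set v := (R(t0) + R(t1))/(t1 − t0). Then 𝒦⁻(ω) ≤ ½v² + R'(t0)·v ≤ 𝒦⁺(ω), where 𝒦⁻(ω) := 2R_min²/(ω+1)² − 2‖R'‖·R_max/(ω+1) and 𝒦⁺(ω) := 2R_max²/(ω−1)² + 2‖R'‖·R_max/(ω−1). (This is the key estimate bounding, up to O(c²), the K-coordinate of any orbit of the billiard map whose consecutive bouncing times differ from its rotation number ω by at most 1.) -/

import Mathlib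

noncomputable section

/-- Sup-norm of a function (for a continuous 1-periodic function this is the maximum of `|f|`). -/
def supNorm (f : ℝ → ℝ) : ℝ := sSup (Set.range fun t => |f t|)

/-- Minimum value of `R` (attained for a continuous 1-periodic `R`). -/
def Rmin (R : ℝ → ℝ) : ℝ := sInf (Set.range R)

/-- Maximum value of `R` (attained for a continuous 1-periodic `R`). -/
def Rmax (R : ℝ → ℝ) : ℝ := sSup (Set.range R)

/-- The constant `σ = min { R_min/(2‖R'‖) , 2√(1+√(1−ε²))·R_min/√‖(R²)''‖ }`. -/
def sigmaR (R : ℝ → ℝ) (ε : ℝ) : ℝ :=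
  min (Rmin R / (2 * supNorm (deriv R)))
    (2 * Real.sqrt (1 + Real.sqrt (1 - ε ^ 2)) * Rmin R /
      Real.sqrt (supNorm (deriv (deriv (fun t => R t ^ 2)))))

lemma per_bddAbove {f : ℝ → ℝ} (hf : Continuous f) (hp : ∀ t, f (t + 1) = f t) :
    BddAbove (Set.range f) := by
  have hper : Function.Periodic f 1 := hp
  have hsub : Set.range f ⊆ f '' Set.Icc 0 1 := by
    rintro y ⟨x, rfl⟩
    obtain ⟨z, hz, hfz⟩ := hper.exists_mem_Ico₀ one_pos x
    exact ⟨z, ⟨hz.1, hz.2.le⟩, hfz.symm⟩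
  exact ((isCompact_Icc.image hf).bddAbove).mono hsub

lemma le_supNorm {f : ℝ → ℝ} (hf : Continuous f) (hp : ∀ t, f (t + 1) = f t) (t : ℝ) :
    |f t| ≤ supNorm f := by
  have : BddAbove (Set.range fun s => |f s|) :=
    per_bddAbove (hf.abs) (fun s => by simp [hp s])
  exact le_csSup this ⟨t, rfl⟩

lemma arith_lo {v w u a M : ℝ} (hv : w ≤ v) (hw4 : 4 * M ≤ w) (hwu : w ≤ u)
    (hM : 0 ≤ M) (ha : -M ≤ a) :
    (1/2) * w ^ 2 - M * u ≤ (1/2) * v ^ 2 + a * v := by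
  nlinarith [mul_nonneg (sub_nonneg.2 hv) (by linarith : (0:ℝ) ≤ v + w - 2 * M),
    mul_nonneg hM (sub_nonneg.2 hwu),
    mul_nonneg (by linarith : (0:ℝ) ≤ v) (by linarith : (0:ℝ) ≤ a + M)]

lemma arith_hi {v U a M : ℝ} (hv : v ≤ U) (hv0 : 0 ≤ v) (hM : 0 ≤ M) (ha : a ≤ M) :
    (1/2) * v ^ 2 + a * v ≤ (1/2) * U ^ 2 + M * U := by
  nlinarith [mul_nonneg (sub_nonneg.2 hv) (by linarith : (0:ℝ) ≤ U + v),
    mul_nonneg (sub_nonneg.2 hv) hM, mul_nonneg hv0 (sub_nonneg.2 ha)]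

/-- Let `ω > 1` with `ω + 1 ≤ σ`, and `t0 < t1` with
`ω − 1 ≤ t1 − t0 ≤ ω + 1`. With `v = (R(t0) + R(t1))/(t1 − t0)` one has
`𝒦⁻(ω) ≤ ½v² + R'(t0)·v ≤ 𝒦⁺(ω)`, where
`𝒦⁻(ω) = 2R_min²/(ω+1)² − 2‖R'‖R_max/(ω+1)` and
`𝒦⁺(ω) = 2R_max²/(ω−1)² + 2‖R'‖R_max/(ω−1)`. -/
theorem invariant_curve_K_estimate (R : ℝ → ℝ) (ε ω t0 t1 : ℝ)
    (hC : ContDiff ℝ 2 R) (hper : ∀ t, R (t + 1) = R t) (hpos : ∀ t, 0 < R t)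
    (hnc : ∃ a b, R a ≠ R b)
    (hε : ε ∈ Set.Ioo (0 : ℝ) 1) (hσ : 0 < sigmaR R ε)
    (hω : 1 < ω) (hωσ : ω + 1 ≤ sigmaR R ε)
    (ht : t0 < t1) (hg1 : ω - 1 ≤ t1 - t0) (hg2 : t1 - t0 ≤ ω + 1) :
    2 * Rmin R ^ 2 / (ω + 1) ^ 2 - 2 * supNorm (deriv R) * Rmax R / (ω + 1) ≤
        (1 / 2) * ((R t0 + R t1) / (t1 - t0)) ^ 2 +
          deriv R t0 * ((R t0 + R t1) / (t1 - t0)) ∧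
      (1 / 2) * ((R t0 + R t1) / (t1 - t0)) ^ 2 +
          deriv R t0 * ((R t0 + R t1) / (t1 - t0)) ≤
        2 * Rmax R ^ 2 / (ω - 1) ^ 2 + 2 * supNorm (deriv R) * Rmax R / (ω - 1) := by
  have hcont : Continuous R := hC.continuous
  have hdc : Continuous (deriv R) := hC.continuous_deriv one_le_two
  have hdper : ∀ t, deriv R (t + 1) = deriv R t := by
    intro t
    have h1 : (fun s => R (s + 1)) = R := funext hper
    have h2 := deriv_comp_add_const (f := R) (a := 1) (x := t)
    rw [h1] at h2
    exact h2.symm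
  set M := supNorm (deriv R) with hMdef
  have hMt0 : |deriv R t0| ≤ M := le_supNorm hdc hdper t0
  have hM0 : 0 ≤ M := (abs_nonneg _).trans hMt0
  have ha1 : -M ≤ deriv R t0 := neg_le_of_abs_le hMt0
  have ha2 : deriv R t0 ≤ M := le_of_abs_le hMt0
  have hRminle : ∀ t, Rmin R ≤ R t := fun t =>
    csInf_le ⟨0, by rintro y ⟨x, rfl⟩; exact (hpos x).le⟩ ⟨t, rfl⟩
  have hRmaxge : ∀ t, R t ≤ Rmax R := fun t =>
    le_csSup (per_bddAbove hcont hper) ⟨t, rfl⟩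
  have hRmin0 : 0 ≤ Rmin R :=
    le_csInf ⟨R 0, ⟨0, rfl⟩⟩ (by rintro y ⟨x, rfl⟩; exact (hpos x).le)
  have hmm : Rmin R ≤ Rmax R := (hRminle 0).trans (hRmaxge 0)
  have hMpos : 0 < M := by
    rcases hM0.lt_or_eq with h | h
    · exact h
    · exfalso
      have h1 : sigmaR R ε ≤ Rmin R / (2 * M) := min_le_left _ _
      rw [← h] at h1
      simp at h1
      linarith
  have hkey : 2 * M * (ω + 1) ≤ Rmin R := by
    have h1 : ω + 1 ≤ Rmin R / (2 * M) := le_trans hωσ (min_le_left _ _)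
    have h2 : 0 < 2 * M := by linarith
    calc 2 * M * (ω + 1) ≤ 2 * M * (Rmin R / (2 * M)) := by nlinarith
    _ = Rmin R := by field_simp
  have hRminpos : 0 < Rmin R := by nlinarith
  set d := t1 - t0 with hd
  have hdpos : 0 < d := by rw [hd]; linarith
  have hnum_lo : 2 * Rmin R ≤ R t0 + R t1 := by
    have := hRminle t0; have := hRminle t1; linarith
  have hnum_hi : R t0 + R t1 ≤ 2 * Rmax R := by
    have := hRmaxge t0; have := hRmaxge t1; linarith
  set v := (R t0 + R t1) / d with hv
  have hω1 : (0:ℝ) < ω - 1 := by linarith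
  have hω2 : (0:ℝ) < ω + 1 := by linarith
  set w := 2 * Rmin R / (ω + 1) with hw
  set u := 2 * Rmax R / (ω + 1) with hu
  set U := 2 * Rmax R / (ω - 1) with hU
  have hv_lo : w ≤ v := by
    rw [hw, hv]
    exact div_le_div₀ (by linarith) hnum_lo hdpos hg2
  have hv_hi : v ≤ U := by
    rw [hU, hv]
    exact div_le_div₀ (by linarith) hnum_hi hω1 hg1
  have hweq : w * (ω + 1) = 2 * Rmin R := by rw [hw]; field_simp
  have hueq : u * (ω + 1) = 2 * Rmax R := by rw [hu]; field_simp
  have hUeq : U * (ω - 1) = 2 * Rmax R := by rw [hU]; field_simp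
  have hw4M : 4 * M ≤ w := by nlinarith [hweq, hkey, hω2, hM0]
  have hwu : w ≤ u := by nlinarith [hweq, hueq, hmm, hω2]
  have hwpos : 0 < w := by positivity
  have hvpos : 0 < v := lt_of_lt_of_le hwpos hv_lo
  have hlhs : 2 * Rmin R ^ 2 / (ω + 1) ^ 2 - 2 * M * Rmax R / (ω + 1)
      = (1/2) * w ^ 2 - M * u := by
    rw [hw, hu]; field_simp
  have hrhs : 2 * Rmax R ^ 2 / (ω - 1) ^ 2 + 2 * M * Rmax R / (ω - 1)
      = (1/2) * U ^ 2 + M * U := by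
    rw [hU]; field_simp
  constructor
  · rw [hlhs]
    exact arith_lo hv_lo hw4M hwu hM0 ha1
  · rw [hrhs]
    exact arith_hi hv_hi hvpos.le hM0 ha2
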